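/- Let X be a compact Hausdorff space, μ a finite complete regular Borel measure on X, and f : X → ℝ bounded. Then the set of discontinuity points of f is a μ-null set if and only if for every ε > 0 there exist continuous f₁, f₂ : X → ℝ with f₁ ≤ f ≤ f₂ and ∫(f₂ − f₁) dμ < ε. -/

import Mathlib

open MeasureTheory Set

section RiemannCharAux

open Filter

private lemma riemann_char_mp {X : Type*} [TopologicalSpace X] [CompactSpace X] [T2Space X]
    [MeasurableSpace X] [BorelSpace X]
    (μ : Measure X) [IsFiniteMeasure μ]
    (hreg : ∀ A : Set X, MeasurableSet A → ∀ ε > (0 : ℝ),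
      ∃ F G : Set X, IsClosed F ∧ IsOpen G ∧ F ⊆ A ∧ A ⊆ G ∧ (μ (G \ F)).toReal < ε)
    (f : X → ℝ) (hf : ∃ C, ∀ x, |f x| ≤ C)
    (hd : MeasurableSet {x | ¬ ContinuousAt f x} ∧ μ {x | ¬ ContinuousAt f x} = 0) :
    ∀ ε > (0 : ℝ), ∃ f₁ f₂ : C(X, ℝ),
        (∀ x, f₁ x ≤ f x) ∧ (∀ x, f x ≤ f₂ x) ∧ ∫ x, (f₂ x - f₁ x) ∂μ < ε := by
  intro ε hε
  have hint : ∀ g : X → ℝ, Continuous g → Integrable g μ := fun g hg =>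
    integrableOn_univ.mp (hg.continuousOn.integrableOn_compact isCompact_univ)
  obtain ⟨C, hC⟩ := hf
  set C' : ℝ := |C| + 1 with hC'
  have hC'pos : 0 < C' := by positivity
  have hfC' : ∀ x, |f x| ≤ C' := fun x => (hC x).trans (by simp [hC', le_abs_self, abs_nonneg]; linarith [le_abs_self C])
  set m : ℝ := (μ univ).toReal with hm
  have hm0 : 0 ≤ m := ENNReal.toReal_nonneg
  set δ : ℝ := ε / (4 * (m + 1)) with hδ
  have hδpos : 0 < δ := by positivity
  set ε' : ℝ := ε / (4 * C') with hε'
  have hε'pos : 0 < ε' := by positivity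
  obtain ⟨F, G, hFc, hGo, hFsub, hGsub, hFG⟩ := hreg _ hd.1 ε' hε'pos
  have hμG : (μ G).toReal < ε' := by
    have h1 : μ G ≤ μ (G \ F) := by
      have : μ G ≤ μ (G \ F) + μ F := by
        rw [← measure_diff_add_inter G hFc.measurableSet]
        exact add_le_add le_rfl (measure_mono inter_subset_right)
      have hF0 : μ F = 0 := measure_mono_null hFsub hd.2
      simpa [hF0] using this
    exact lt_of_le_of_lt (ENNReal.toReal_mono (measure_ne_top μ _) h1) hFG
  set K : Set X := Gᶜ with hK
  have hKc : IsClosed K := hGo.isClosed_compl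
  have hKcont : ∀ x ∈ K, ContinuousAt f x := by
    intro x hx
    by_contra hcon
    exact hx (hGsub hcon)
  have hVex : ∀ x : K, ∃ V : Set X, IsOpen V ∧ (x:X) ∈ V ∧ ∀ y ∈ V, |f y - f (x:X)| < δ := by
    rintro ⟨x, hx⟩
    have h1 : ∀ᶠ y in nhds x, dist (f y) (f x) < δ :=
      (hKcont x hx) (Metric.ball_mem_nhds _ hδpos)
    rw [eventually_nhds_iff] at h1
    obtain ⟨t, ht1, ht2, ht3⟩ := h1
    exact ⟨t, ht2, ht3, fun y hy => by rw [← Real.dist_eq]; exact ht1 y hy⟩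
  choose V hVo hxV hVlt using hVex
  have hKcov : K ⊆ ⋃ i : K, V i := fun x hx => mem_iUnion.2 ⟨⟨x, hx⟩, hxV _⟩
  obtain ⟨t, ht⟩ := (hKc.isCompact).elim_finite_subcover V hVo hKcov
  set ι : Type _ := Option {i : K // i ∈ t} with hι
  set U : ι → Set X := fun o => o.elim G (fun i => V i) with hU
  have hUo : ∀ i, IsOpen (U i) := by rintro (_ | i); exacts [hGo, hVo _]
  have hUcov : (univ : Set X) ⊆ ⋃ i, U i := by
    intro x _
    by_cases hx : x ∈ G
    · exact mem_iUnion.2 ⟨none, hx⟩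
    · obtain ⟨i, hi, hxi⟩ := mem_iUnion₂.1 (ht hx)
      exact mem_iUnion.2 ⟨some ⟨i, hi⟩, hxi⟩
  obtain ⟨φ, hφ⟩ := PartitionOfUnity.exists_isSubordinate isClosed_univ U hUo hUcov
  set c : ι → ℝ := fun o => o.elim C' (fun i => f (i:K) + δ) with hc
  set d : ι → ℝ := fun o => o.elim (-C') (fun i => f (i:K) - δ) with hdd
  set f₂ : C(X, ℝ) := ∑ i : ι, c i • (φ i) with hf₂
  set f₁ : C(X, ℝ) := ∑ i : ι, d i • (φ i) with hf₁
  have hsum1 : ∀ x : X, ∑ i : ι, φ i x = 1 := fun x => by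
    rw [← finsum_eq_sum_of_fintype]; exact φ.sum_eq_one (mem_univ x)
  have hmem : ∀ (i : ι) (x : X), φ i x ≠ 0 → x ∈ U i := fun i x h =>
    hφ i (subset_tsupport _ (Function.mem_support.2 h))
  have hf₂eval : ∀ x, f₂ x = ∑ i : ι, c i * φ i x := by
    intro x; simp [hf₂, ContinuousMap.coe_sum]
  have hf₁eval : ∀ x, f₁ x = ∑ i : ι, d i * φ i x := by
    intro x; simp [hf₁, ContinuousMap.coe_sum]
  have hfc : ∀ (i : ι) (x : X), φ i x ≠ 0 → f x ≤ c i := by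
    rintro (_ | i) x hne
    · exact (abs_le.1 (hfC' x)).2
    · have hxU : x ∈ V i.1 := hmem _ x hne
      have h2 := (abs_lt.1 (hVlt i.1 x hxU)).2
      simp only [hc, Option.elim]
      linarith
  have hfd : ∀ (i : ι) (x : X), φ i x ≠ 0 → d i ≤ f x := by
    rintro (_ | i) x hne
    · exact neg_le_of_abs_le (hfC' x)
    · have hxU : x ∈ V i.1 := hmem _ x hne
      have h2 := (abs_lt.1 (hVlt i.1 x hxU)).1
      simp only [hdd, Option.elim]
      linarith
  have hle2 : ∀ x, f x ≤ f₂ x := by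
    intro x
    rw [hf₂eval]
    have step1 : f x = ∑ i : ι, φ i x * f x := by rw [← Finset.sum_mul, hsum1, one_mul]
    have step2 : ∑ i : ι, φ i x * f x ≤ ∑ i : ι, c i * φ i x := by
      refine Finset.sum_le_sum fun i _ => ?_
      rw [mul_comm (c i)]
      rcases eq_or_ne (φ i x) 0 with h | h
      · simp [h]
      · exact mul_le_mul_of_nonneg_left (hfc i x h) (φ.nonneg i x)
    linarith
  have hle1 : ∀ x, f₁ x ≤ f x := by
    intro x
    rw [hf₁eval]
    have step1 : f x = ∑ i : ι, φ i x * f x := by rw [← Finset.sum_mul, hsum1, one_mul]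
    have step2 : ∑ i : ι, d i * φ i x ≤ ∑ i : ι, φ i x * f x := by
      refine Finset.sum_le_sum fun i _ => ?_
      rw [mul_comm (d i)]
      rcases eq_or_ne (φ i x) 0 with h | h
      · simp [h]
      · exact mul_le_mul_of_nonneg_left (hfd i x h) (φ.nonneg i x)
    linarith
  have hdiff : ∀ x, f₂ x - f₁ x ≤ 2 * δ + 2 * C' * φ none x := by
    intro x
    rw [hf₂eval, hf₁eval, ← Finset.sum_sub_distrib]
    have heq : ∀ i : ι, c i * φ i x - d i * φ i x = (c i - d i) * φ i x :=
      fun i => by ring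
    simp only [heq]
    rw [Fintype.sum_option]
    have h1 : (c none - d none) * φ none x = 2 * C' * φ none x := by
      simp only [hc, hdd, Option.elim]; ring
    have h2 : ∀ i : {i : K // i ∈ t}, (c (some i) - d (some i)) * φ (some i) x
        = 2 * δ * φ (some i) x := by
      intro i; simp only [hc, hdd, Option.elim]; ring
    simp only [h1, h2]
    have h3 : ∑ i : {i : K // i ∈ t}, 2 * δ * φ (some i) x ≤ 2 * δ := by
      rw [← Finset.mul_sum]
      have h4 : ∑ i : {i : K // i ∈ t}, φ (some i) x ≤ 1 := by
        have := hsum1 x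
        rw [Fintype.sum_option] at this
        have h5 := φ.nonneg none x
        linarith
      nlinarith [hδpos.le]
    linarith
  have hφint : Integrable (fun x => φ none x) μ := hint _ (φ none).continuous
  have hφG : ∫ x, φ none x ∂μ ≤ (μ G).toReal := by
    have hGm : MeasurableSet G := hGo.measurableSet
    have hind : ∀ x, φ none x ≤ G.indicator (fun _ => (1:ℝ)) x := by
      intro x
      by_cases hx : x ∈ G
      · simp [hx, indicator_of_mem, φ.le_one none x]
      · have : φ none x = 0 := by
          by_contra h
          exact hx (hmem none x h)
        simp [hx, this]
    calc ∫ x, φ none x ∂μ ≤ ∫ x, G.indicator (fun _ => (1:ℝ)) x ∂μ :=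
          integral_mono hφint ((integrable_const (1:ℝ)).indicator hGm) hind
      _ = (μ G).toReal := by rw [integral_indicator_const _ hGm]; simp; rfl
  refine ⟨f₁, f₂, hle1, hle2, ?_⟩
  have hi21 : Integrable (fun x => f₂ x - f₁ x) μ :=
    hint _ (f₂.continuous.sub f₁.continuous)
  have hibound : Integrable (fun x => 2 * δ + 2 * C' * φ none x) μ :=
    (integrable_const _).add (hφint.const_mul _)
  calc ∫ x, (f₂ x - f₁ x) ∂μ ≤ ∫ x, (2 * δ + 2 * C' * φ none x) ∂μ :=
        integral_mono hi21 hibound hdiff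
    _ = 2 * δ * m + 2 * C' * ∫ x, φ none x ∂μ := by
        rw [integral_add (integrable_const _) (hφint.const_mul _), integral_const,
          integral_const_mul]
        simp [hm, smul_eq_mul, mul_comm, Measure.real]
    _ < ε := by
        have h1 : 2 * C' * ∫ x, φ none x ∂μ ≤ 2 * C' * (μ G).toReal :=
          mul_le_mul_of_nonneg_left hφG (by positivity)
        have h2 : 2 * C' * (μ G).toReal < 2 * C' * ε' :=
          mul_lt_mul_of_pos_left hμG (by positivity)
        have h3 : 2 * C' * ε' = ε / 2 := by
          rw [hε']; field_simp; ring
        have h4 : 2 * δ * m ≤ ε / 2 := by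
          have key : δ * (4 * (m + 1)) = ε := by
            rw [hδ]; field_simp
          nlinarith [hδpos.le, hm0]
        have h5 : 2 * C' * ∫ x, φ none x ∂μ < ε / 2 := lt_of_le_of_lt h1 (h2.trans_eq h3)
        calc 2 * δ * m + 2 * C' * ∫ x, φ none x ∂μ
            < ε / 2 + ε / 2 := add_lt_add_of_le_of_lt h4 h5
          _ = ε := by ring

private lemma riemann_char_mpr {X : Type*} [TopologicalSpace X] [CompactSpace X] [T2Space X]
    [MeasurableSpace X] [BorelSpace X]
    (μ : Measure X) [IsFiniteMeasure μ] (hcomplete : μ.IsComplete)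
    (f : X → ℝ)
    (h : ∀ ε > (0 : ℝ), ∃ f₁ f₂ : C(X, ℝ),
        (∀ x, f₁ x ≤ f x) ∧ (∀ x, f x ≤ f₂ x) ∧ ∫ x, (f₂ x - f₁ x) ∂μ < ε) :
    (MeasurableSet {x | ¬ ContinuousAt f x} ∧ μ {x | ¬ ContinuousAt f x} = 0) := by
  have hint : ∀ g : X → ℝ, Continuous g → Integrable g μ := fun g hg =>
    integrableOn_univ.mp (hg.continuousOn.integrableOn_compact isCompact_univ)
  have H : ∀ n k : ℕ, ∃ p : C(X, ℝ) × C(X, ℝ),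
      (∀ x, p.1 x ≤ f x) ∧ (∀ x, f x ≤ p.2 x) ∧
      ∫ x, (p.2 x - p.1 x) ∂μ < 1 / (((n:ℝ) + 1) ^ 2 * ((k:ℝ) + 1)) := by
    intro n k
    have hpos : (0:ℝ) < 1 / (((n:ℝ) + 1) ^ 2 * ((k:ℝ) + 1)) := by positivity
    obtain ⟨f₁, f₂, h1, h2, h3⟩ := h _ hpos
    exact ⟨(f₁, f₂), h1, h2, h3⟩
  choose p h1 h2 h3 using H
  set A : ℕ → ℕ → Set X := fun n k =>
    {x | 1 / ((n:ℝ) + 1) ≤ (p n k).2 x - (p n k).1 x} with hA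
  have hAmeas : ∀ n k, MeasurableSet (A n k) := fun n k =>
    (isClosed_le continuous_const (((p n k).2.continuous).sub ((p n k).1.continuous))).measurableSet
  have hAsmall : ∀ n k, (μ (A n k)).toReal < 1 / (((n:ℝ) + 1) * ((k:ℝ) + 1)) := by
    intro n k
    have hnn : 0 ≤ᵐ[μ] fun x => (p n k).2 x - (p n k).1 x :=
      Filter.Eventually.of_forall fun x => sub_nonneg.2 ((h1 n k x).trans (h2 n k x))
    have hi : Integrable (fun x => (p n k).2 x - (p n k).1 x) μ :=
      hint _ (((p n k).2.continuous).sub ((p n k).1.continuous))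
    have hm := mul_meas_ge_le_integral_of_nonneg hnn hi (1 / ((n:ℝ) + 1))
    have hm2 : (1 / ((n:ℝ) + 1)) * (μ (A n k)).toReal <
        1 / (((n:ℝ) + 1) ^ 2 * ((k:ℝ) + 1)) := lt_of_le_of_lt hm (h3 n k)
    have hn1 : (0:ℝ) < (n:ℝ) + 1 := by positivity
    have hk1 : (0:ℝ) < (k:ℝ) + 1 := by positivity
    calc (μ (A n k)).toReal = ((n:ℝ)+1) * ((1 / ((n:ℝ) + 1)) * (μ (A n k)).toReal) := by
          field_simp
      _ < ((n:ℝ)+1) * (1 / (((n:ℝ) + 1) ^ 2 * ((k:ℝ) + 1))) :=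
          mul_lt_mul_of_pos_left hm2 hn1
      _ = 1 / (((n:ℝ) + 1) * ((k:ℝ) + 1)) := by field_simp
  set B : Set X := ⋃ n, ⋂ k, A n k with hB
  have hBmeas : MeasurableSet B :=
    MeasurableSet.iUnion fun n => MeasurableSet.iInter fun k => hAmeas n k
  have hBnull : μ B = 0 := by
    refine measure_iUnion_null fun n => ?_
    have hle : ∀ k : ℕ, (μ (⋂ k, A n k)).toReal ≤
        (1 / ((n:ℝ)+1)) * (1 / ((k:ℝ)+1)) := by
      intro k
      have := measure_mono (μ := μ) (iInter_subset (A n) k)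
      have h4 : (μ (⋂ k, A n k)).toReal ≤ (μ (A n k)).toReal :=
        ENNReal.toReal_mono (measure_ne_top μ _) this
      refine h4.trans (le_of_lt ?_)
      calc (μ (A n k)).toReal < 1 / (((n:ℝ) + 1) * ((k:ℝ) + 1)) := hAsmall n k
        _ = (1 / ((n:ℝ)+1)) * (1 / ((k:ℝ)+1)) := by rw [div_mul_div_comm, one_mul]
    have htend : Tendsto (fun k : ℕ => (1 / ((n:ℝ)+1)) * (1 / ((k:ℝ)+1))) atTop (nhds 0) := by
      have := tendsto_one_div_add_atTop_nhds_zero_nat (𝕜 := ℝ)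
      simpa using this.const_mul (1 / ((n:ℝ)+1))
    have h0 : (μ (⋂ k, A n k)).toReal ≤ 0 := ge_of_tendsto' htend hle
    have h0' : (μ (⋂ k, A n k)).toReal = 0 := le_antisymm h0 ENNReal.toReal_nonneg
    rcases (ENNReal.toReal_eq_zero_iff _).mp h0' with h | h
    · exact h
    · exact absurd h (measure_ne_top μ _)
  have hsub : {x | ¬ ContinuousAt f x} ⊆ B := by
    intro x hx
    simp only [mem_setOf_eq, ContinuousAt, Metric.tendsto_nhds] at hx
    push_neg at hx
    obtain ⟨ε, hε, hfreq'⟩ := hx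
    have hfreq := Filter.not_eventually.mp hfreq'
    obtain ⟨n, hn⟩ := exists_nat_one_div_lt hε
    refine mem_iUnion.2 ⟨n, mem_iInter.2 fun k => ?_⟩
    by_contra hAx
    simp only [hA, mem_setOf_eq, not_le] at hAx
    set g₁ := (p n k).1
    set g₂ := (p n k).2
    set η : ℝ := (1 / ((n:ℝ)+1) - (g₂ x - g₁ x)) / 2 with hη
    have hηpos : 0 < η := by simp only [hη]; linarith
    have e1 : ∀ᶠ y in nhds x, g₂ y < g₂ x + η :=
      (g₂.continuous.continuousAt).eventually_lt_const (lt_add_of_pos_right _ hηpos)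
    have e2 : ∀ᶠ y in nhds x, g₁ x - η < g₁ y :=
      (g₁.continuous.continuousAt).eventually_const_lt (sub_lt_self _ hηpos)
    obtain ⟨y, hy, hy2, hy1⟩ := (hfreq.and_eventually (e1.and e2)).exists
    have hb1 : f y ≤ g₂ y := h2 n k y
    have hb2 : g₁ y ≤ f y := h1 n k y
    have hb3 : f x ≤ g₂ x := h2 n k x
    have hb4 : g₁ x ≤ f x := h1 n k x
    simp only [not_not, Real.dist_eq] at hy
    have habs : |f y - f x| < 1 / ((n:ℝ)+1) := by
      rw [abs_sub_lt_iff]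
      constructor <;> simp only [hη] at * <;> linarith
    linarith [hn, hy, habs, abs_nonneg (f y - f x)]
  have hnull : μ {x | ¬ ContinuousAt f x} = 0 :=
    measure_mono_null hsub hBnull
  exact ⟨hcomplete.out _ hnull, hnull⟩

end RiemannCharAux

/-- Let `X` be compact Hausdorff, `μ` a finite complete regular Borel measure on `X`, and
`f : X → ℝ` bounded. Then the set of discontinuity points of `f` is a measurable `μ`-null
set iff for every `ε > 0` there exist continuous `f₁ ≤ f ≤ f₂` with `∫ (f₂ - f₁) dμ < ε`. -/
theorem riemann_char {X : Type*} [TopologicalSpace X] [CompactSpace X] [T2Space X]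
    [MeasurableSpace X] [BorelSpace X]
    (μ : Measure X) [IsFiniteMeasure μ] (hcomplete : μ.IsComplete)
    (hreg : ∀ A : Set X, MeasurableSet A → ∀ ε > (0 : ℝ),
      ∃ F G : Set X, IsClosed F ∧ IsOpen G ∧ F ⊆ A ∧ A ⊆ G ∧ (μ (G \ F)).toReal < ε)
    (f : X → ℝ) (hf : ∃ C, ∀ x, |f x| ≤ C) :
    (MeasurableSet {x | ¬ ContinuousAt f x} ∧ μ {x | ¬ ContinuousAt f x} = 0) ↔
      ∀ ε > (0 : ℝ), ∃ f₁ f₂ : C(X, ℝ),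
        (∀ x, f₁ x ≤ f x) ∧ (∀ x, f x ≤ f₂ x) ∧ ∫ x, (f₂ x - f₁ x) ∂μ < ε :=
  ⟨riemann_char_mp μ hreg f hf, riemann_char_mpr μ hcomplete f⟩
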